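/- arXiv:2602.04821 — 3 statements merged into one kernel-verified Lean document; each statement's English description precedes it below -/
import Mathlib

section
/- Let n ≥ 1 and let R be a random variable uniformly distributed on {1, 2, …, n+1}, and set p = R/(n+1). Then for every α ∈ (0,1), ℙ(p ≤ α) = ⌊α(n+1)⌋/(n+1), and in particular ℙ(p ≤ α) ≤ α. Hence the conformalized p-value p is super-uniform. -/
open MeasureTheory

/-- Super-uniformity of the conformalized p-value: if `R` is uniform on
`{1,…,n+1}` and `p = R/(n+1)`, then for every `α ∈ (0,1)`,
`ℙ(p ≤ α) = ⌊α(n+1)⌋/(n+1) ≤ α`. -/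
theorem conformal_pvalue_superuniform
    {Ω : Type*} [MeasurableSpace Ω] (ℙ : Measure Ω) [IsProbabilityMeasure ℙ]
    (n : ℕ) (hn : 1 ≤ n) (R : Ω → ℕ)
    (hrange : ∀ᵐ ω ∂ℙ, R ω ∈ Finset.Icc 1 (n + 1))
    (hunif : ∀ r ∈ Finset.Icc 1 (n + 1), ℙ {ω | R ω = r} = 1 / (n + 1))
    (p : Ω → ℝ) (hp : ∀ ω, p ω = (R ω : ℝ) / (n + 1))
    (α : ℝ) (hα : α ∈ Set.Ioo (0 : ℝ) 1) :
    ℙ {ω | p ω ≤ α} = ENNReal.ofReal ((⌊α * (n + 1)⌋₊ : ℝ) / (n + 1)) ∧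
    ℙ {ω | p ω ≤ α} ≤ ENNReal.ofReal α := by
  obtain ⟨hα0, hα1⟩ := hα
  set k := ⌊α * (n + 1)⌋₊ with hk
  have hnp : (0:ℝ) < (n:ℝ) + 1 := by positivity
  have hαn : 0 ≤ α * ((n:ℝ) + 1) := by positivity
  have hkle : (k:ℝ) ≤ α * ((n:ℝ) + 1) := Nat.floor_le hαn
  have hkn : k ≤ n := by
    have : k < n + 1 := by
      rw [hk, Nat.floor_lt hαn]; push_cast; nlinarith
    omega
  have hchar : ∀ ω, (p ω ≤ α ↔ R ω ≤ k) := by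
    intro ω
    rw [hp ω, div_le_iff₀ hnp, hk]
    exact (Nat.le_floor_iff hαn).symm
  set c : ENNReal := 1 / ((n:ENNReal) + 1) with hc
  have hcne : ((n:ENNReal) + 1) ≠ 0 := by simp
  have hctop : ((n:ENNReal) + 1) ≠ ⊤ := by simp
  have hcfin : c ≠ ⊤ := by
    simp [hc, one_div, ENNReal.inv_ne_top, hcne]
  -- upper bound
  have hupper : ℙ {ω | p ω ≤ α} ≤ (k : ENNReal) * c := by
    have hsub : {ω | p ω ≤ α} ≤ᵐ[ℙ] ⋃ r ∈ Finset.Icc 1 k, {ω | R ω = r} := by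
      filter_upwards [hrange] with ω hω hpω
      have h1 : 1 ≤ R ω := (Finset.mem_Icc.mp hω).1
      have h2 : R ω ≤ k := (hchar ω).mp hpω
      exact Set.mem_biUnion (Finset.mem_Icc.mpr ⟨h1, h2⟩) rfl
    calc ℙ {ω | p ω ≤ α} ≤ ℙ (⋃ r ∈ Finset.Icc 1 k, {ω | R ω = r}) :=
          measure_mono_ae hsub
      _ ≤ ∑ r ∈ Finset.Icc 1 k, ℙ {ω | R ω = r} := measure_biUnion_finset_le _ _
      _ = ∑ r ∈ Finset.Icc 1 k, c := by
          refine Finset.sum_congr rfl fun r hr => ?_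
          have : r ∈ Finset.Icc 1 (n+1) := by
            rw [Finset.mem_Icc] at hr ⊢; omega
          rw [hunif r this, hc]
      _ = (k : ENNReal) * c := by
          rw [Finset.sum_const, Nat.card_Icc]
          simp [nsmul_eq_mul]
  -- complement bound
  have hcompl : ℙ {ω | p ω ≤ α}ᶜ ≤ ((n + 1 - k : ℕ) : ENNReal) * c := by
    have hsub : {ω | p ω ≤ α}ᶜ ≤ᵐ[ℙ] ⋃ r ∈ Finset.Icc (k+1) (n+1), {ω | R ω = r} := by
      filter_upwards [hrange] with ω hω hpω
      have h2 : R ω ≤ n + 1 := (Finset.mem_Icc.mp hω).2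
      have h1 : k + 1 ≤ R ω := by
        by_contra h
        exact hpω ((hchar ω).mpr (by omega))
      exact Set.mem_biUnion (Finset.mem_Icc.mpr ⟨h1, h2⟩) rfl
    calc ℙ {ω | p ω ≤ α}ᶜ ≤ ℙ (⋃ r ∈ Finset.Icc (k+1) (n+1), {ω | R ω = r}) :=
          measure_mono_ae hsub
      _ ≤ ∑ r ∈ Finset.Icc (k+1) (n+1), ℙ {ω | R ω = r} := measure_biUnion_finset_le _ _
      _ = ∑ r ∈ Finset.Icc (k+1) (n+1), c := by
          refine Finset.sum_congr rfl fun r hr => ?_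
          have : r ∈ Finset.Icc 1 (n+1) := by
            rw [Finset.mem_Icc] at hr ⊢; omega
          rw [hunif r this, hc]
      _ = ((n + 1 - k : ℕ) : ENNReal) * c := by
          rw [Finset.sum_const, Nat.card_Icc]
          have : n + 1 + 1 - (k + 1) = n + 1 - k := by omega
          simp [this, nsmul_eq_mul]
  -- total: k*c + (n+1-k)*c = 1
  have htot : (k : ENNReal) * c + ((n + 1 - k : ℕ) : ENNReal) * c = 1 := by
    rw [← add_mul]
    have : (k : ENNReal) + ((n + 1 - k : ℕ) : ENNReal) = ((n:ENNReal) + 1) := by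
      rw [← Nat.cast_add]
      have : k + (n + 1 - k) = n + 1 := by omega
      rw [this]; push_cast; ring
    rw [this, hc, mul_one_div, ENNReal.div_self hcne hctop]
  -- lower bound
  have hone : (1 : ENNReal) ≤ ℙ {ω | p ω ≤ α} + ℙ {ω | p ω ≤ α}ᶜ := by
    have := measure_union_le (μ := ℙ) {ω | p ω ≤ α} {ω | p ω ≤ α}ᶜ
    rwa [Set.union_compl_self, measure_univ] at this
  have hlower : (k : ENNReal) * c ≤ ℙ {ω | p ω ≤ α} := by
    have h1 : (k : ENNReal) * c + ((n + 1 - k : ℕ) : ENNReal) * c ≤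
        ℙ {ω | p ω ≤ α} + ((n + 1 - k : ℕ) : ENNReal) * c := by
      rw [htot]
      exact le_trans hone (add_le_add_right hcompl _)
    have hfin : ((n + 1 - k : ℕ) : ENNReal) * c ≠ ⊤ :=
      ENNReal.mul_ne_top (ENNReal.natCast_ne_top _) hcfin
    exact (ENNReal.add_le_add_iff_right hfin).mp h1
  have heq : ℙ {ω | p ω ≤ α} = (k : ENNReal) * c := le_antisymm hupper hlower
  have hofReal : ENNReal.ofReal ((k : ℝ) / ((n:ℝ) + 1)) = (k : ENNReal) * c := by
    rw [ENNReal.ofReal_div_of_pos hnp, hc, mul_one_div]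
    congr 1
    · exact ENNReal.ofReal_natCast k
    · push_cast
      rw [ENNReal.ofReal_add (by positivity) zero_le_one]
      simp [ENNReal.ofReal_natCast]
  constructor
  · rw [heq, hofReal]
  · rw [heq, ← hofReal]
    apply ENNReal.ofReal_le_ofReal
    rw [div_le_iff₀ hnp]
    nlinarith
end

section
/- Let (Ω, ℱ, ℙ) be a probability space, m ≥ 1, and let P₁, …, P_m : Ω → [0,1] be random p-values with arbitrary joint dependence. Let N ⊆ {1,…,m} be the set of true null hypotheses and suppose each null p-value is super-uniform: for every i ∈ N and every t ∈ [0,1], ℙ(P_i ≤ t) ≤ t. Let c_m = Σ_{i=1}^m 1/i and α ∈ (0,1). Define the Benjamini–Yekutieli procedure: with order statistics P_{(1)} ≤ … ≤ P_{(m)}, let k* = max{k : P_{(k)} ≤ k α/(m c_m)} (with k* = 0 if the set is empty), and reject exactly the hypotheses i with P_i ≤ k* α/(m c_m). Let V be the number of rejected true nulls and Rj the total number of rejections. Then the false discovery rate satisfies FDR = 𝔼[V / max(Rj, 1)] ≤ (|N|/m) · α ≤ α. -/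
open MeasureTheory
open scoped Classical


noncomputable def byF {Ω : Type*} {m : ℕ} (P : Fin m → Ω → ℝ) (c : ℝ)
    (i : Fin m) (j : ℕ) (ω : Ω) : ℝ :=
  if j = 0 then 0 else if P i ω ≤ j * c then 1 else 0

lemma by_abel (β : ℝ) (G : ℕ → ℝ) (hG0 : G 0 = 0) :
    ∀ n : ℕ, (∀ j ≤ n, G j ≤ j * β) →
      ∑ j ∈ Finset.range n, (1/((j:ℝ)+1)) * (G (j+1) - G j)
        ≤ β * ∑ j ∈ Finset.range n, (1/((j:ℝ)+1)) + (G n - n*β)/((max n 1 : ℕ) : ℝ) := by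
  intro n
  induction n with
  | zero => intro _; simp [hG0]
  | succ n ih =>
    intro h
    have hGn : G n ≤ n * β := h n (Nat.le_succ n)
    have ihh := ih (fun j hj => h j (hj.trans (Nat.le_succ n)))
    rw [Finset.sum_range_succ, Finset.sum_range_succ]
    rcases Nat.eq_zero_or_pos n with hn | hn
    · subst hn
      simp [hG0]
    · have hmax : (max n 1) = n := max_eq_left hn
      have hmax2 : (max (n+1) 1) = n+1 := max_eq_left (by omega)
      rw [hmax] at ihh
      rw [hmax2]
      have hn' : (0:ℝ) < n := by exact_mod_cast hn
      have key : (G n - n*β)/n + (1/((n:ℝ)+1)) * (G (n+1) - G n)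
          ≤ β * (1/((n:ℝ)+1)) + (G (n+1) - ((n:ℝ)+1)*β)/((n:ℝ)+1) := by
        rw [div_add' _ _ _ (ne_of_gt hn'), div_le_iff₀ hn']
        field_simp
        nlinarith
      push_cast
      push_cast at ihh key
      linarith

/-- Benjamini–Yekutieli FDR control under arbitrary dependence: given `m`
p-values with values in `[0,1]`, a set `N` of true nulls whose p-values are
super-uniform, the BY step-up procedure with thresholds `k α/(m c_m)`,
`c_m = Σ_{i=1}^m 1/i`, rejecting exactly the `P_i ≤ k* α/(m c_m)` where
`k* = max{k : P_{(k)} ≤ k α/(m c_m)}` (with `k* = 0` if the set is empty),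
satisfies `FDR = 𝔼[V / max(Rj, 1)] ≤ (|N|/m) α ≤ α`. -/
theorem benjamini_yekutieli_fdr_control
    {Ω : Type*} [MeasurableSpace Ω] (ℙ : Measure Ω) [IsProbabilityMeasure ℙ]
    (m : ℕ) (hm : 1 ≤ m) (P : Fin m → Ω → ℝ)
    (hmeas : ∀ i, Measurable (P i))
    (hval : ∀ i ω, P i ω ∈ Set.Icc (0 : ℝ) 1)
    (N : Finset (Fin m))
    (hnull : ∀ i ∈ N, ∀ t ∈ Set.Icc (0 : ℝ) 1,
      ℙ {ω | P i ω ≤ t} ≤ ENNReal.ofReal t)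
    (α : ℝ) (hα : α ∈ Set.Ioo (0 : ℝ) 1)
    (cm : ℝ) (hcm : cm = ∑ i ∈ Finset.range m, (1 : ℝ) / (i + 1))
    (kstar : Ω → ℕ)
    -- `k* = max{k ≥ 1 : P_{(k)} ≤ k α/(m c_m)}` (0 if empty), where the `k`-th
    -- order statistic `P_{(k)}` is realized as `(P · ω) ∘ Tuple.sort (P · ω)`
    -- evaluated at the `Fin m`-index `k'` with `k = k' + 1`.
    (hkstar : ∀ ω, kstar ω =
      (Finset.univ.filter (fun k' : Fin m =>
          P (Tuple.sort (fun i => P i ω) k') ω ≤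
            ((k' : ℕ) + 1) * α / (m * cm))).sup
        (fun k' : Fin m => (k' : ℕ) + 1))
    (V Rj : Ω → ℕ)
    (hV : ∀ ω, V ω =
      (N.filter (fun i => P i ω ≤ (kstar ω : ℝ) * α / (m * cm))).card)
    (hRj : ∀ ω, Rj ω =
      (Finset.univ.filter (fun i : Fin m =>
        P i ω ≤ (kstar ω : ℝ) * α / (m * cm))).card) :
    (∫ ω, (V ω : ℝ) / max (Rj ω : ℝ) 1 ∂ℙ) ≤ ((N.card : ℝ) / m) * α ∧
    ((N.card : ℝ) / m) * α ≤ α := by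
  
  obtain ⟨hα0, hα1⟩ := hα
  have hmR : (0:ℝ) < m := by exact_mod_cast hm
  have hcm1 : (1:ℝ) ≤ cm := by
    rw [hcm]
    calc (1:ℝ) = 1/((0:ℕ)+1) := by norm_num
    _ ≤ _ := Finset.single_le_sum (f := fun i : ℕ => 1/((i:ℝ)+1))
        (fun i _ => by positivity) (Finset.mem_range.mpr hm)
  have hcm0 : (0:ℝ) < cm := lt_of_lt_of_le one_pos hcm1
  have hc0 : (0:ℝ) < α / (m * cm) := by positivity
  -- kstar ≤ m
  have hks_le : ∀ ω, kstar ω ≤ m := by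
    intro ω
    rw [hkstar ω]
    exact Finset.sup_le (fun k' _ => by omega)
  -- Rj ≥ kstar
  have hRj_ge : ∀ ω, kstar ω ≤ Rj ω := by
    intro ω
    rcases Nat.eq_zero_or_pos (kstar ω) with h0 | hpos
    · omega
    · have hne : (Finset.univ.filter (fun k' : Fin m =>
          P (Tuple.sort (fun i => P i ω) k') ω ≤
            ((k' : ℕ) + 1) * α / (m * cm))).Nonempty := by
        by_contra hc
        rw [Finset.not_nonempty_iff_eq_empty] at hc
        rw [hkstar ω, hc] at hpos
        simp at hpos
      obtain ⟨k', hk'mem, hk'⟩ := Finset.exists_mem_eq_sup _ hne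
        (fun k' : Fin m => (k' : ℕ) + 1)
      rw [← hkstar ω] at hk'
      have hk'le := (Finset.mem_filter.mp hk'mem).2
      -- the image of Iic k' under sort is contained in the rejection set
      have hsub : (Finset.Iic k').image (Tuple.sort (fun i => P i ω)) ⊆
          Finset.univ.filter (fun i : Fin m =>
            P i ω ≤ (kstar ω : ℝ) * α / (m * cm)) := by
        intro i hi
        obtain ⟨l, hl, rfl⟩ := Finset.mem_image.mp hi
        rw [Finset.mem_Iic] at hl
        refine Finset.mem_filter.mpr ⟨Finset.mem_univ _, ?_⟩
        have hmono := Tuple.monotone_sort (fun i => P i ω) hl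
        simp only [Function.comp] at hmono
        calc P (Tuple.sort (fun i => P i ω) l) ω
            ≤ P (Tuple.sort (fun i => P i ω) k') ω := hmono
          _ ≤ ((k' : ℕ) + 1) * α / (m * cm) := hk'le
          _ = (kstar ω : ℝ) * α / (m * cm) := by rw [hk']; push_cast; ring_nf
      have hcard : ((Finset.Iic k').image (Tuple.sort (fun i => P i ω))).card
          = (k' : ℕ) + 1 := by
        rw [Finset.card_image_of_injective _ (Equiv.injective _), Fin.card_Iic]
      calc kstar ω = (k' : ℕ) + 1 := hk'
        _ = _ := hcard.symm
        _ ≤ _ := Finset.card_le_card hsub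
        _ = Rj ω := (hRj ω).symm
  set c := α / (m * cm) with hc
  -- byF is monotone in j and bounded in [0,1]
  have hFmono : ∀ (i : Fin m) (j : ℕ) ω, byF P c i j ω ≤ byF P c i (j+1) ω := by
    intro i j ω
    unfold byF
    rcases Nat.eq_zero_or_pos j with h0 | hj
    · subst h0; simp; split <;> norm_num
    · have hj0 : j ≠ 0 := by omega
      have hj1 : j + 1 ≠ 0 := by omega
      rw [if_neg hj0, if_neg hj1]
      by_cases hle : P i ω ≤ j * c
      · rw [if_pos hle, if_pos]
        calc P i ω ≤ (j:ℝ) * c := hle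
          _ ≤ ((j:ℕ)+1 : ℝ) * c := by
              apply mul_le_mul_of_nonneg_right _ (le_of_lt hc0)
              push_cast; linarith
          _ = (((j+1):ℕ) : ℝ) * c := by push_cast; ring
      · rw [if_neg hle]; split <;> norm_num
  have hterm_nonneg : ∀ (i : Fin m) (j : ℕ) ω,
      (0:ℝ) ≤ (1/((j:ℝ)+1)) * (byF P c i (j+1) ω - byF P c i j ω) := by
    intro i j ω
    have := hFmono i j ω
    have h1 : (0:ℝ) ≤ 1/((j:ℝ)+1) := by positivity
    nlinarith
  -- pointwise bound
  have hpt : ∀ ω, (V ω : ℝ) / max (Rj ω : ℝ) 1 ≤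
      ∑ i ∈ N, ∑ j ∈ Finset.range m,
        (1/((j:ℝ)+1)) * (byF P c i (j+1) ω - byF P c i j ω) := by
    intro ω
    have hmaxpos : (0:ℝ) < max (Rj ω : ℝ) 1 :=
      lt_of_lt_of_le one_pos (le_max_right _ _)
    have hVsum : (V ω : ℝ) / max (Rj ω : ℝ) 1 =
        ∑ i ∈ N, if P i ω ≤ (kstar ω : ℝ) * α / (m * cm)
          then 1 / max (Rj ω : ℝ) 1 else 0 := by
      rw [hV ω]
      rw [← Finset.sum_filter, Finset.sum_const, nsmul_eq_mul, mul_one_div]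
    rw [hVsum]
    apply Finset.sum_le_sum
    intro i hi
    by_cases hrej : P i ω ≤ (kstar ω : ℝ) * α / (m * cm)
    · rw [if_pos hrej]
      have hrej' : P i ω ≤ (kstar ω : ℝ) * c := by
        rw [hc, ← mul_div_assoc]; exact hrej
      set A := (Finset.Icc 1 m).filter (fun j : ℕ => P i ω ≤ (j:ℝ) * c) with hA
      have hmA : m ∈ A := by
        refine Finset.mem_filter.mpr ⟨Finset.mem_Icc.mpr ⟨hm, le_rfl⟩, ?_⟩
        calc P i ω ≤ (kstar ω : ℝ) * c := hrej'
          _ ≤ (m:ℝ) * c := by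
              apply mul_le_mul_of_nonneg_right _ (le_of_lt hc0)
              exact_mod_cast hks_le ω
      have hAne : A.Nonempty := ⟨m, hmA⟩
      set j0 := A.min' hAne with hj0def
      have hj0A : j0 ∈ A := A.min'_mem hAne
      obtain ⟨hj0Icc, hj0le⟩ := Finset.mem_filter.mp hj0A
      obtain ⟨hj01, hj0m⟩ := Finset.mem_Icc.mp hj0Icc
      have hj0pos : (0:ℝ) < (j0:ℝ) := by exact_mod_cast hj01
      have hj0max : (j0:ℝ) ≤ max (Rj ω : ℝ) 1 := by
        rcases Nat.eq_zero_or_pos (kstar ω) with h0 | hksp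
        · have hP0 : P i ω ≤ 0 := by
            rw [h0] at hrej; simpa using hrej
          have h1A : (1:ℕ) ∈ A := by
            refine Finset.mem_filter.mpr ⟨Finset.mem_Icc.mpr ⟨le_rfl, hm⟩, ?_⟩
            push_cast
            calc P i ω ≤ 0 := hP0
              _ ≤ 1 * c := by positivity
          have hle1 : j0 ≤ 1 := A.min'_le 1 h1A
          calc (j0:ℝ) ≤ 1 := by exact_mod_cast hle1
            _ ≤ _ := le_max_right _ _
        · have hkA : kstar ω ∈ A := by
            refine Finset.mem_filter.mpr
              ⟨Finset.mem_Icc.mpr ⟨hksp, hks_le ω⟩, hrej'⟩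
          have h1 : j0 ≤ kstar ω := A.min'_le _ hkA
          calc (j0:ℝ) ≤ (Rj ω : ℝ) := by
                exact_mod_cast le_trans h1 (hRj_ge ω)
            _ ≤ _ := le_max_left _ _
      have hstep1 : 1 / max (Rj ω : ℝ) 1 ≤ 1 / (j0:ℝ) :=
        one_div_le_one_div_of_le hj0pos hj0max
      have hsingle : 1/(j0:ℝ) ≤ ∑ j ∈ Finset.range m,
          (1/((j:ℝ)+1)) * (byF P c i (j+1) ω - byF P c i j ω) := by
        have hmem : j0 - 1 ∈ Finset.range m := Finset.mem_range.mpr (by omega)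
        have hstep := Finset.single_le_sum
          (f := fun j : ℕ => (1/((j:ℝ)+1)) * (byF P c i (j+1) ω - byF P c i j ω))
          (fun j _ => hterm_nonneg i j ω) hmem
        have hsucc : j0 - 1 + 1 = j0 := by omega
        have hF1 : byF P c i j0 ω = 1 := by
          unfold byF
          rw [if_neg (by omega : j0 ≠ 0), if_pos hj0le]
        have hF0 : byF P c i (j0 - 1) ω = 0 := by
          unfold byF
          rcases Nat.eq_zero_or_pos (j0 - 1) with h0 | hpos
          · rw [if_pos h0]
          · rw [if_neg (by omega : j0 - 1 ≠ 0), if_neg]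
            intro hcon
            have : j0 - 1 ∈ A := by
              refine Finset.mem_filter.mpr
                ⟨Finset.mem_Icc.mpr ⟨by omega, by omega⟩, hcon⟩
            have := A.min'_le _ this
            omega
        have hcast : ((j0 - 1 : ℕ) : ℝ) + 1 = (j0 : ℝ) := by
          have : ((j0 - 1 : ℕ) : ℝ) = (j0:ℝ) - 1 := by
            push_cast [Nat.cast_sub hj01]; ring
          rw [this]; ring
        simp only [hsucc, hF1, hF0, hcast] at hstep
        calc 1/(j0:ℝ) = 1/(j0:ℝ) * (1 - 0) := by ring
          _ ≤ _ := hstep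
      exact le_trans hstep1 hsingle
    · rw [if_neg hrej]
      exact Finset.sum_nonneg (fun j _ => hterm_nonneg i j ω)
  -- measurability / integrability of byF
  have hFset : ∀ (i : Fin m) (j : ℕ), MeasurableSet {ω | P i ω ≤ (j:ℝ) * c} := by
    intro i j
    exact (hmeas i) measurableSet_Iic
  have hFrepr : ∀ (i : Fin m) (j : ℕ), j ≠ 0 → byF P c i j =
      Set.indicator {ω | P i ω ≤ (j:ℝ) * c} (fun _ => (1:ℝ)) := by
    intro i j hj
    funext ω
    unfold byF
    rw [if_neg hj, Set.indicator_apply]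
    rfl
  have hFint : ∀ (i : Fin m) (j : ℕ), Integrable (byF P c i j) ℙ := by
    intro i j
    rcases Nat.eq_zero_or_pos j with h0 | hj
    · subst h0
      have : byF P c i 0 = fun _ => (0:ℝ) := by funext ω; unfold byF; rw [if_pos rfl]
      rw [this]; exact integrable_const 0
    · rw [hFrepr i j (by omega)]
      exact (integrable_const (1:ℝ)).indicator (hFset i j)
  set G : Fin m → ℕ → ℝ := fun i j =>
    if j = 0 then 0 else (ℙ {ω | P i ω ≤ (j:ℝ) * c}).toReal with hGdef
  have hFint_eq : ∀ (i : Fin m) (j : ℕ), ∫ ω, byF P c i j ω ∂ℙ = G i j := by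
    intro i j
    rcases Nat.eq_zero_or_pos j with h0 | hj
    · subst h0
      have : byF P c i 0 = fun _ => (0:ℝ) := by funext ω; unfold byF; rw [if_pos rfl]
      simp [hGdef, this]
    · have hj0 : j ≠ 0 := by omega
      rw [hFrepr i j hj0]
      rw [MeasureTheory.integral_indicator_const (1:ℝ) (hFset i j)]
      simp [hGdef, hj0]; rfl
  have htermint : ∀ (i : Fin m) (j : ℕ),
      Integrable (fun ω => (1/((j:ℝ)+1)) * (byF P c i (j+1) ω - byF P c i j ω)) ℙ :=
    fun i j => (((hFint i (j+1)).sub (hFint i j)).const_mul _)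
  have hGle : ∀ i ∈ N, ∀ j ≤ m, G i j ≤ j * c := by
    intro i hi j hjm
    rcases Nat.eq_zero_or_pos j with h0 | hj
    · subst h0; simp [hGdef]
    · have hj0 : j ≠ 0 := by omega
      have ht1 : (j:ℝ) * c ≤ 1 := by
        calc (j:ℝ) * c ≤ (m:ℝ) * c := by
              apply mul_le_mul_of_nonneg_right _ (le_of_lt hc0)
              exact_mod_cast hjm
          _ = α / cm := by rw [hc]; field_simp
          _ ≤ α := div_le_self (le_of_lt hα0) hcm1
          _ ≤ 1 := le_of_lt hα1
      have ht0 : (0:ℝ) ≤ (j:ℝ) * c := by positivity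
      have := hnull i hi ((j:ℝ) * c) ⟨ht0, ht1⟩
      simp only [hGdef, if_neg hj0]
      exact ENNReal.toReal_le_of_le_ofReal ht0 this
  -- main chain
  constructor
  · have hIntg : Integrable (fun ω => ∑ i ∈ N, ∑ j ∈ Finset.range m,
        (1/((j:ℝ)+1)) * (byF P c i (j+1) ω - byF P c i j ω)) ℙ :=
      MeasureTheory.integrable_finset_sum _ (fun i _ =>
        MeasureTheory.integrable_finset_sum _ (fun j _ => htermint i j))
    have h1 : (∫ ω, (V ω : ℝ) / max (Rj ω : ℝ) 1 ∂ℙ) ≤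
        ∫ ω, ∑ i ∈ N, ∑ j ∈ Finset.range m,
          (1/((j:ℝ)+1)) * (byF P c i (j+1) ω - byF P c i j ω) ∂ℙ := by
      apply MeasureTheory.integral_mono_of_nonneg
      · exact Filter.Eventually.of_forall (fun ω => by positivity)
      · exact hIntg
      · exact Filter.Eventually.of_forall hpt
    have h2 : (∫ ω, ∑ i ∈ N, ∑ j ∈ Finset.range m,
          (1/((j:ℝ)+1)) * (byF P c i (j+1) ω - byF P c i j ω) ∂ℙ) =
        ∑ i ∈ N, ∑ j ∈ Finset.range m, (1/((j:ℝ)+1)) * (G i (j+1) - G i j) := by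
      rw [MeasureTheory.integral_finset_sum _ (fun i _ =>
        MeasureTheory.integrable_finset_sum _ (fun j _ => htermint i j))]
      refine Finset.sum_congr rfl (fun i _ => ?_)
      rw [MeasureTheory.integral_finset_sum _ (fun j _ => htermint i j)]
      refine Finset.sum_congr rfl (fun j _ => ?_)
      rw [MeasureTheory.integral_const_mul,
        MeasureTheory.integral_sub (hFint i (j+1)) (hFint i j),
        hFint_eq i (j+1), hFint_eq i j]
    have h3 : ∀ i ∈ N, ∑ j ∈ Finset.range m,
        (1/((j:ℝ)+1)) * (G i (j+1) - G i j) ≤ α / m := by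
      intro i hi
      have habel := by_abel c (G i) (by simp [hGdef]) m (hGle i hi)
      have hmax : (max m 1 : ℕ) = m := max_eq_left hm
      rw [hmax] at habel
      have hsum_cm : ∑ j ∈ Finset.range m, (1/((j:ℝ)+1)) = cm := by
        rw [hcm]
      have hneg : (G i m - (m:ℝ) * c) / (m:ℝ) ≤ 0 := by
        apply div_nonpos_of_nonpos_of_nonneg _ (le_of_lt hmR)
        have := hGle i hi m le_rfl
        linarith
      have hcc : c * cm = α / m := by
        rw [hc]; field_simp
      calc ∑ j ∈ Finset.range m, (1/((j:ℝ)+1)) * (G i (j+1) - G i j)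
          ≤ c * cm + (G i m - (m:ℝ) * c) / (m:ℝ) := by rw [← hsum_cm]; exact habel
        _ ≤ c * cm := by linarith
        _ = α / m := hcc
    calc (∫ ω, (V ω : ℝ) / max (Rj ω : ℝ) 1 ∂ℙ)
        ≤ ∑ i ∈ N, ∑ j ∈ Finset.range m,
          (1/((j:ℝ)+1)) * (G i (j+1) - G i j) := h1.trans (le_of_eq h2)
      _ ≤ ∑ _i ∈ N, α / m := Finset.sum_le_sum h3
      _ = (N.card : ℝ) * (α / m) := by rw [Finset.sum_const, nsmul_eq_mul]
      _ = ((N.card : ℝ) / m) * α := by ring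
  · have hcard : N.card ≤ m := by
      have := Finset.card_le_univ N
      simpa using this
    have h1 : ((N.card : ℝ) / m) ≤ 1 := by
      rw [div_le_one hmR]; exact_mod_cast hcard
    calc ((N.card : ℝ) / m) * α ≤ 1 * α := by
          apply mul_le_mul_of_nonneg_right h1 (le_of_lt hα0)
      _ = α := one_mul α
end

section
/- Let S₁, …, S_n be calibration anomaly scores and S a test score, all real-valued random variables. Suppose at most c of the calibration scores are contaminated, and the remaining n − c clean calibration scores together with S are exchangeable with almost surely pairwise distinct values, with S drawn from the null. Let k ≥ c, form the trimmed calibration set C_trim by removing the k largest calibration scores, and define the trimmed p-value p_trim = (1 + #{j ∈ C_trim : S_j ≥ S}) / (1 + (n − k)). Then for every α ∈ (0,1), ℙ(p_trim ≤ α) ≤ α + k/n + c/n. -/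
open MeasureTheory
open scoped Classical

namespace TrimAux

noncomputable def rk {m : ℕ} (j : Fin m) (y : Fin m → ℝ) : ℕ :=
  (Finset.univ.filter fun i => y j ≤ y i).card

lemma rk_measurable {m : ℕ} (j : Fin m) : Measurable (rk (m := m) j) := by
  have h : rk (m := m) j = fun y => ∑ i : Fin m, if y j ≤ y i then 1 else 0 := by
    funext y; rw [rk, Finset.card_filter]
  rw [h]
  exact Finset.measurable_sum _ fun i _ =>
    Measurable.ite (measurableSet_le (measurable_pi_apply j) (measurable_pi_apply i))
      measurable_const measurable_const

lemma rk_pos {m : ℕ} (j : Fin m) (y : Fin m → ℝ) : 1 ≤ rk j y := by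
  have : j ∈ Finset.univ.filter fun i => y j ≤ y i := by simp
  exact Finset.card_pos.mpr ⟨j, this⟩

lemma rk_comp_swap {m : ℕ} (j l : Fin m) (y : Fin m → ℝ) :
    rk l (y ∘ Equiv.swap j l) = rk j y := by
  unfold rk
  refine Finset.card_equiv (Equiv.swap j l) fun i => ?_
  simp [Equiv.swap_apply_right, Function.comp]

lemma rk_lt_of_lt {m : ℕ} {a b : Fin m} {y : Fin m → ℝ} (h : y a < y b) :
    rk b y < rk a y := by
  apply Finset.card_lt_card
  constructor
  · intro i hi
    simp only [Finset.mem_filter, Finset.mem_univ, true_and] at hi ⊢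
    linarith
  · intro hsub
    have : a ∈ Finset.univ.filter fun i => y a ≤ y i := by simp
    have h2 := hsub this
    simp only [Finset.mem_filter, Finset.mem_univ, true_and] at h2
    linarith

lemma rk_injective {m : ℕ} {y : Fin m → ℝ} (hy : ∀ i j : Fin m, i ≠ j → y i ≠ y j) :
    Function.Injective (fun j => rk j y) := by
  intro a b hab
  by_contra hne
  rcases lt_or_gt_of_ne (hy a b hne) with h | h
  · exact absurd hab (Nat.ne_of_gt (rk_lt_of_lt h))
  · exact absurd hab (Nat.ne_of_lt (rk_lt_of_lt h))

lemma rank_superuniform {Ω : Type*} [MeasurableSpace Ω] (ℙ : Measure Ω)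
    [IsProbabilityMeasure ℙ] {m : ℕ} (Y : Fin (m + 1) → Ω → ℝ)
    (hYm : ∀ i, Measurable (Y i))
    (hexch : ∀ π : Equiv.Perm (Fin (m + 1)),
      Measure.map (fun ω i => Y (π i) ω) ℙ = Measure.map (fun ω i => Y i ω) ℙ)
    (hdist : ∀ᵐ ω ∂ℙ, ∀ i j, i ≠ j → Y i ω ≠ Y j ω) (r : ℕ) :
    ((m + 1 : ℕ) : ENNReal) * ℙ {ω | rk (Fin.last m) (fun i => Y i ω) ≤ r} ≤ r := by
  set g : Ω → (Fin (m + 1) → ℝ) := fun ω i => Y i ω with hg_def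
  have hg : Measurable g := measurable_pi_lambda _ hYm
  set B : Set (Fin (m + 1) → ℝ) := {y | rk (Fin.last m) y ≤ r} with hB_def
  have hB : MeasurableSet B := rk_measurable (Fin.last m) measurableSet_Iic
  set A : Fin (m + 1) → Set Ω := fun j => {ω | rk j (g ω) ≤ r} with hA_def
  have hA : ∀ j, MeasurableSet (A j) := fun j =>
    (rk_measurable j).comp hg measurableSet_Iic
  have key : ∀ j, ℙ (A j) = ℙ (A (Fin.last m)) := by
    intro j
    set π := Equiv.swap j (Fin.last m) with hπ
    have h1 : A j = (fun ω i => Y (π i) ω) ⁻¹' B := by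
      ext ω
      simp only [hA_def, hB_def, Set.mem_preimage, Set.mem_setOf_eq]
      have : (fun i => Y (π i) ω) = g ω ∘ π := rfl
      rw [this, rk_comp_swap]
    have hmeas2 : Measurable (fun ω i => Y (π i) ω) :=
      measurable_pi_lambda _ fun i => hYm _
    rw [h1, ← Measure.map_apply hmeas2 hB, hexch π, Measure.map_apply hg hB]
    rfl
  have hsum : ∑ j : Fin (m + 1), ℙ (A j) = ((m + 1 : ℕ) : ENNReal) * ℙ (A (Fin.last m)) := by
    rw [Finset.sum_congr rfl fun j _ => key j]
    simp [Finset.sum_const, Finset.card_univ]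
  have hbound : ∑ j : Fin (m + 1), ℙ (A j) ≤ r := by
    have h1 : ∀ j : Fin (m + 1), ℙ (A j) = ∫⁻ ω, (A j).indicator 1 ω ∂ℙ := fun j =>
      (lintegral_indicator_one (hA j)).symm
    calc ∑ j : Fin (m + 1), ℙ (A j)
        = ∑ j : Fin (m + 1), ∫⁻ ω, (A j).indicator 1 ω ∂ℙ :=
          Finset.sum_congr rfl fun j _ => h1 j
      _ = ∫⁻ ω, ∑ j : Fin (m + 1), (A j).indicator 1 ω ∂ℙ :=
          (lintegral_finset_sum _ fun j _ => (measurable_one.indicator (hA j))).symm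
      _ ≤ ∫⁻ _, (r : ENNReal) ∂ℙ := by
          refine lintegral_mono_ae ?_
          filter_upwards [hdist] with ω hω
          have hcard : ∑ j : Fin (m + 1), (A j).indicator (1 : Ω → ENNReal) ω
              = ((Finset.univ.filter fun j => ω ∈ A j).card : ENNReal) := by
            rw [Finset.card_filter, Nat.cast_sum]
            refine Finset.sum_congr rfl fun j _ => ?_
            by_cases hj : ω ∈ A j <;> simp [Set.indicator_apply, hj]
          rw [hcard]
          have hle : (Finset.univ.filter fun j => ω ∈ A j).card ≤ (Finset.Icc 1 r).card := by
            refine Finset.card_le_card_of_injOn (fun j => rk j (g ω)) ?_ ?_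
            · intro j hj
              simp only [Finset.mem_coe, Finset.mem_filter, Finset.mem_univ, true_and] at hj
              simp only [Finset.mem_coe, Finset.mem_Icc]
              exact ⟨rk_pos j (g ω), hj⟩
            · intro a _ b _ hab
              exact rk_injective (fun i j hij => hω i j hij) hab
          rw [Nat.card_Icc] at hle
          exact_mod_cast hle.trans (by omega)
      _ = r := by simp
  calc ((m + 1 : ℕ) : ENNReal) * ℙ {ω | rk (Fin.last m) (fun i => Y i ω) ≤ r}
      = ∑ j : Fin (m + 1), ℙ (A j) := hsum.symm
    _ ≤ r := hbound

lemma aux_real {N K C α : ℝ} (hN : 0 < N) (hC0 : 0 ≤ C) (hCK : C ≤ K) (hKN : K ≤ N)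
    (hα : 0 < α) (hlt : α + K / N + C / N < 1) :
    (α * (N - K + 1) + K) / (N - C + 1) ≤ α + K / N + C / N := by
  have hd : (0 : ℝ) < N - C + 1 := by linarith
  have hKCN : K + C < N := by
    have h1 : (K + C) / N < 1 := by
      have : K / N + C / N = (K + C) / N := by rw [← add_div]
      linarith
    have := (div_lt_one hN).mp h1
    linarith
  have expand : α + K / N + C / N = (α * N + K + C) / N := by
    field_simp
  rw [div_le_iff₀ hd, expand, div_mul_eq_mul_div, le_div_iff₀ hN]
  nlinarith [mul_nonneg hC0 (show (0:ℝ) ≤ N - K - C by linarith),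
    mul_nonneg (mul_nonneg hα.le hN.le) (show (0:ℝ) ≤ K - C by linarith)]

end TrimAux

/-- Trimming preserves super-uniformity: with at most `c` contaminated
calibration scores, the clean scores (indexed through `ι`) together with the
null test score `Stest` being exchangeable and a.s. pairwise distinct, and the
trimmed calibration set `T ω` obtained by removing the `k ≥ c` largest
calibration scores, the trimmed conformal p-value
`p_trim = (1 + #{j ∈ T : S_j ≥ S}) / (1 + (n − k))` satisfies
`ℙ(p_trim ≤ α) ≤ α + k/n + c/n` for every `α ∈ (0,1)`. -/



theorem trimming_preserves_superuniformity
    {Ω : Type*} [MeasurableSpace Ω] (ℙ : Measure Ω) [IsProbabilityMeasure ℙ]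
    (n c k : ℕ) (hcn : c ≤ n) (hck : c ≤ k) (hkn : k ≤ n)
    (S : Fin n → Ω → ℝ) (Stest : Ω → ℝ)
    (hmeas : ∀ j, Measurable (S j)) (hmeasTest : Measurable Stest)
    -- `ι` enumerates the clean (uncontaminated) calibration indices.
    (ι : Fin (n - c) ↪ Fin n)
    -- `Y` lists the clean calibration scores followed by the test score.
    (Y : Fin (n - c + 1) → Ω → ℝ)
    (hY : Y = Fin.snoc (fun i => S (ι i)) Stest)
    (hexch : ∀ π : Equiv.Perm (Fin (n - c + 1)),
      Measure.map (fun ω i => Y (π i) ω) ℙ = Measure.map (fun ω i => Y i ω) ℙ)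
    (hdist : ∀ᵐ ω ∂ℙ, ∀ i j, i ≠ j → Y i ω ≠ Y j ω)
    -- `T ω` is the trimmed calibration set: the `k` removed indices carry the
    -- `k` largest calibration scores.
    (T : Ω → Finset (Fin n))
    (hTcard : ∀ ω, (T ω).card = n - k)
    (hTtrim : ∀ ω, ∀ j ∈ T ω, ∀ i ∉ T ω, S j ω ≤ S i ω)
    (ptrim : Ω → ℝ)
    (hp : ∀ ω, ptrim ω =
      (1 + (((T ω).filter (fun j => Stest ω ≤ S j ω)).card : ℝ)) /
        (1 + ((n - k : ℕ) : ℝ)))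
    (α : ℝ) (hα : α ∈ Set.Ioo (0 : ℝ) 1) :
    ℙ {ω | ptrim ω ≤ α} ≤
      ENNReal.ofReal (α + (k : ℝ) / n + (c : ℝ) / n) := by
  obtain ⟨hα0, hα1⟩ := hα
  rcases Nat.eq_zero_or_pos n with hn0 | hnpos
  · subst hn0
    have hempty : {ω | ptrim ω ≤ α} = ∅ := by
      ext ω
      simp only [Set.mem_setOf_eq, Set.mem_empty_iff_false, iff_false, not_le]
      have hT : T ω = ∅ := Finset.eq_empty_of_isEmpty _
      rw [hp ω, hT]
      simp
      linarith
    rw [hempty]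
    simp
  set r : ℕ := ⌊α * ((n : ℝ) - k + 1) + (k : ℝ)⌋₊ with hr
  have hYmeas : ∀ i : Fin (n - c + 1), Measurable (Y i) := by
    subst hY
    intro i
    refine Fin.lastCases ?_ (fun i => ?_) i
    · simpa [Fin.snoc_last] using hmeasTest
    · simpa [Fin.snoc_castSucc] using hmeas (ι i)
  have hsub : {ω | ptrim ω ≤ α} ⊆
      {ω | TrimAux.rk (Fin.last (n - c)) (fun i => Y i ω) ≤ r} := by
    intro ω hω
    simp only [Set.mem_setOf_eq] at hω ⊢
    set Cc := ((T ω).filter fun j => Stest ω ≤ S j ω).card with hCc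
    have hden : (0 : ℝ) < 1 + ((n - k : ℕ) : ℝ) := by positivity
    have h1 : 1 + (Cc : ℝ) ≤ α * (1 + ((n - k : ℕ) : ℝ)) := by
      rw [hp ω] at hω
      exact (div_le_iff₀ hden).mp hω
    set D := (Finset.univ.filter fun i : Fin (n - c) => Stest ω ≤ S (ι i) ω).card with hD
    have hrk : TrimAux.rk (Fin.last (n - c)) (fun i => Y i ω) = D + 1 := by
      subst hY
      unfold TrimAux.rk
      rw [Finset.card_filter, Fin.sum_univ_castSucc, hD, Finset.card_filter]
      simp [Fin.snoc_last, Fin.snoc_castSucc]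
    have hDC : D ≤ Cc + k := by
      set V := (Finset.univ.filter fun i : Fin (n - c) => Stest ω ≤ S (ι i) ω).map ι with hV
      have hVcard : V.card = D := Finset.card_map _
      have hsplit := Finset.card_filter_add_card_filter_not
        (s := V) (p := fun j => j ∈ T ω)
      have h2 : (V.filter fun j => j ∈ T ω).card ≤ Cc := by
        apply Finset.card_le_card
        intro j hj
        simp only [Finset.mem_filter] at hj ⊢
        obtain ⟨hjV, hjT⟩ := hj
        refine ⟨hjT, ?_⟩
        rw [hV, Finset.mem_map] at hjV
        obtain ⟨i, hi, rfl⟩ := hjV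
        simp only [Finset.mem_filter] at hi
        exact hi.2
      have h3 : (V.filter fun j => ¬ j ∈ T ω).card ≤ k := by
        have hss : (V.filter fun j => ¬ j ∈ T ω) ⊆ (T ω)ᶜ := by
          intro j hj
          simp only [Finset.mem_filter] at hj
          simp [Finset.mem_compl, hj.2]
        have hcompl : (T ω)ᶜ.card = k := by
          rw [Finset.card_compl, hTcard ω]
          simp only [Fintype.card_fin]
          omega
        calc (V.filter fun j => ¬ j ∈ T ω).card ≤ (T ω)ᶜ.card := Finset.card_le_card hss
          _ = k := hcompl
      omega
    rw [hrk]
    apply Nat.le_floor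
    have hcast : ((n - k : ℕ) : ℝ) = (n : ℝ) - k := by
      rw [Nat.cast_sub hkn]
    rw [hcast] at h1
    have hDCr : (D : ℝ) ≤ (Cc : ℝ) + k := by exact_mod_cast hDC
    push_cast
    linarith
  have hmain := TrimAux.rank_superuniform ℙ Y hYmeas hexch hdist r
  have hP1 : ℙ {ω | ptrim ω ≤ α} ≤
      ℙ {ω | TrimAux.rk (Fin.last (n - c)) (fun i => Y i ω) ≤ r} := measure_mono hsub
  by_cases hbig : 1 ≤ α + (k : ℝ) / n + (c : ℝ) / n
  · calc ℙ {ω | ptrim ω ≤ α} ≤ 1 := prob_le_one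
      _ = ENNReal.ofReal 1 := ENNReal.ofReal_one.symm
      _ ≤ _ := ENNReal.ofReal_le_ofReal hbig
  · push_neg at hbig
    have hMne : ((n - c + 1 : ℕ) : ENNReal) ≠ 0 := by simp
    have hMnt : ((n - c + 1 : ℕ) : ENNReal) ≠ ⊤ := by simp
    have hP2 : ℙ {ω | TrimAux.rk (Fin.last (n - c)) (fun i => Y i ω) ≤ r} ≤
        (r : ENNReal) / ((n - c + 1 : ℕ) : ENNReal) := by
      rw [ENNReal.le_div_iff_mul_le (Or.inl hMne) (Or.inl hMnt), mul_comm]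
      exact hmain
    have hnR : (0 : ℝ) < n := by exact_mod_cast hnpos
    have hmcast : (((n - c : ℕ)) : ℝ) = (n : ℝ) - c := by rw [Nat.cast_sub hcn]
    have hnum_nonneg : (0 : ℝ) ≤ α * ((n : ℝ) - k + 1) + k := by
      have : (0 : ℝ) ≤ (n : ℝ) - k := by
        have : (k : ℝ) ≤ n := by exact_mod_cast hkn
        linarith
      positivity
    have hreal : (r : ℝ) / (((n - c : ℕ) : ℝ) + 1) ≤ α + (k : ℝ) / n + (c : ℝ) / n := by
      have hfl : (r : ℝ) ≤ α * ((n : ℝ) - k + 1) + k := Nat.floor_le hnum_nonneg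
      have hdpos : (0 : ℝ) < ((n - c : ℕ) : ℝ) + 1 := by positivity
      have haux := TrimAux.aux_real (N := (n : ℝ)) (K := (k : ℝ)) (C := (c : ℝ)) hnR
        (by positivity) (by exact_mod_cast hck) (by exact_mod_cast hkn) hα0 hbig
      calc (r : ℝ) / (((n - c : ℕ) : ℝ) + 1)
          ≤ (α * ((n : ℝ) - k + 1) + k) / (((n - c : ℕ) : ℝ) + 1) := by gcongr
        _ = (α * ((n : ℝ) - k + 1) + k) / ((n : ℝ) - c + 1) := by rw [hmcast]
        _ ≤ _ := haux
    have hconv : (r : ENNReal) / ((n - c + 1 : ℕ) : ENNReal) =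
        ENNReal.ofReal ((r : ℝ) / (((n - c : ℕ) : ℝ) + 1)) := by
      rw [ENNReal.ofReal_div_of_pos (by positivity)]
      congr 1
      · exact (ENNReal.ofReal_natCast r).symm
      · rw [← ENNReal.ofReal_natCast (n - c + 1)]
        push_cast
        ring_nf
    calc ℙ {ω | ptrim ω ≤ α}
        ≤ (r : ENNReal) / ((n - c + 1 : ℕ) : ENNReal) := hP1.trans hP2
      _ = ENNReal.ofReal ((r : ℝ) / (((n - c : ℕ) : ℝ) + 1)) := hconv
      _ ≤ _ := ENNReal.ofReal_le_ofReal hreal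
end
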